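/- Let K be a compact strictly convex body in ℝ^{n+1} with nonempty interior and u a unit vector. Define ρ : ∂K → ∂K by sending x to the unique other point of ∂K on the line {x + t·u : t ∈ ℝ} if that line meets ∂K in two points, and ρ(x) = x if the line meets ∂K only at x. Then ρ is a well-defined involution of ∂K, i.e., ρ ∘ ρ = id. -/

import Mathlib

private lemma three_collinear {E : Type*} [NormedAddCommGroup E] [NormedSpace ℝ E]
    {K : Set E} (hKc : IsCompact K) (hKconv : StrictConvex ℝ K)
    {u : E} (hu0 : u ≠ 0) (x : E) {a b c : ℝ} (hab : a ≠ b) (hac : a ≠ c) (hbc : b ≠ c)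
    (ha : x + a • u ∈ frontier K) (hb : x + b • u ∈ frontier K)
    (hc : x + c • u ∈ frontier K) : False := by
  have hsub : frontier K ⊆ K := hKc.isClosed.frontier_subset
  have mid : ∀ p q r : ℝ, p < q → q < r → x + p • u ∈ frontier K →
      x + q • u ∈ frontier K → x + r • u ∈ frontier K → False := by
    intro p q r hpq hqr hp hq hr
    have hrp : (0:ℝ) < r - p := by linarith
    set s : ℝ := (r - q) / (r - p) with hs
    set t : ℝ := (q - p) / (r - p) with ht
    have hspos : 0 < s := div_pos (by linarith) hrp
    have htpos : 0 < t := div_pos (by linarith) hrp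
    have hst : s + t = 1 := by
      rw [hs, ht, ← add_div, div_eq_one_iff_eq hrp.ne']; ring
    have hne : x + p • u ≠ x + r • u := by
      intro h
      have : p • u = r • u := by
        have := add_left_cancel h; exact this
      exact (by linarith : p ≠ r) (smul_left_injective ℝ hu0 this)
    have key := hKconv (hsub hp) (hsub hr) hne hspos htpos hst
    have heq : s • (x + p • u) + t • (x + r • u) = x + q • u := by
      have h2 : s * p + t * r = q := by
        rw [hs, ht, div_mul_eq_mul_div, div_mul_eq_mul_div, ← add_div,
          div_eq_iff hrp.ne']; ring
      calc s • (x + p • u) + t • (x + r • u)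
          = (s + t) • x + (s * p + t * r) • u := by
            simp only [smul_add, smul_smul, add_smul]; abel
        _ = x + q • u := by rw [hst, h2, one_smul]
    rw [heq] at key
    exact hq.2 key
  rcases hab.lt_or_gt with h1 | h1 <;> rcases hac.lt_or_gt with h2 | h2 <;>
    rcases hbc.lt_or_gt with h3 | h3
  · exact mid a b c h1 h3 ha hb hc
  · exact mid a c b h2 h3 ha hc hb
  · linarith
  · exact mid c a b h2 h1 hc ha hb
  · exact mid b a c h1 h2 hb ha hc
  · linarith
  · exact mid b c a h3 h2 hb hc ha
  · exact mid c b a h3 h1 hc hb ha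

/-- Let `K` be a compact strictly convex body in `ℝ^{n+1}` with nonempty interior and `u`
a unit vector.  The map `ρ : ∂K → ∂K` sending `x` to the unique other point of `∂K` on
the line `{x + t • u}` when that line meets `∂K` twice, and fixing `x` when the line
meets `∂K` only at `x`, is well defined (it exists) and is an involution: `ρ ∘ ρ = id`
on `∂K`. -/
theorem stmt_13 (n : ℕ) (K : Set (EuclideanSpace ℝ (Fin (n + 1))))
    (hKc : IsCompact K) (hKconv : StrictConvex ℝ K) (hKint : (interior K).Nonempty)
    (u : EuclideanSpace ℝ (Fin (n + 1))) (hu : ‖u‖ = 1)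
    (Spec : (EuclideanSpace ℝ (Fin (n + 1)) → EuclideanSpace ℝ (Fin (n + 1))) → Prop)
    (hSpec : ∀ ρ, Spec ρ ↔ ∀ x ∈ frontier K,
      ρ x ∈ frontier K ∧
      (∃ t : ℝ, ρ x = x + t • u) ∧
      (ρ x = x ↔ ∀ y ∈ frontier K, (∃ t : ℝ, y = x + t • u) → y = x) ∧
      (∀ y ∈ frontier K, (∃ t : ℝ, y = x + t • u) → y = x ∨ y = ρ x)) :
    (∃ ρ, Spec ρ) ∧
    (∀ ρ, Spec ρ → ∀ x ∈ frontier K, ρ (ρ x) = x) := by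
  have hu0 : u ≠ 0 := by
    intro h; rw [h, norm_zero] at hu; norm_num at hu
  constructor
  · classical
    refine ⟨fun x => if h : ∃ y, y ∈ frontier K ∧ (∃ t : ℝ, y = x + t • u) ∧ y ≠ x
      then h.choose else x, ?_⟩
    rw [hSpec]
    intro x hx
    by_cases h : ∃ y, y ∈ frontier K ∧ (∃ t : ℝ, y = x + t • u) ∧ y ≠ x
    · obtain ⟨hy1, ⟨t, ht⟩, hyne⟩ := h.choose_spec
      simp only [dif_pos h]
      have ht0 : t ≠ 0 := by
        intro h0; rw [h0] at ht; simp at ht; exact hyne ht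
      refine ⟨hy1, ⟨t, ht⟩, ⟨fun hc => absurd hc hyne, fun hall => absurd (hall _ hy1 ⟨t, ht⟩) hyne⟩, ?_⟩
      rintro y hyF ⟨s, hs⟩
      by_cases hyx : y = x
      · exact Or.inl hyx
      · right
        have hs0 : s ≠ 0 := by
          intro h0; rw [h0] at hs; simp at hs; exact hyx hs
        by_cases hst : s = t
        · rw [hs, hst, ← ht]
        · exfalso
          have hx' : x + (0:ℝ) • u ∈ frontier K := by simpa using hx
          rw [hs] at hyF
          rw [ht] at hy1
          exact three_collinear hKc hKconv hu0 x (Ne.symm hs0) (Ne.symm ht0) hst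
            hx' hyF hy1
    · rw [dif_neg h]
      push_neg at h
      exact ⟨hx, ⟨0, by simp⟩, iff_of_true rfl fun y hyF hyl => h y hyF hyl,
        fun y hyF hyl => Or.inl (h y hyF hyl)⟩
  · intro ρ hρ x hx
    have h1 := (hSpec ρ).mp hρ x hx
    obtain ⟨hρx, ⟨t, ht⟩, hiff, huniq⟩ := h1
    by_cases hfix : ρ x = x
    · rw [hfix, hfix]
    · have h2 := (hSpec ρ).mp hρ (ρ x) hρx
      obtain ⟨_, _, _, huniq2⟩ := h2
      have hxline : ∃ s : ℝ, x = ρ x + s • u := ⟨-t, by rw [ht]; simp⟩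
      rcases huniq2 x hx hxline with h | h
      · exact absurd h.symm hfix
      · exact h.symm
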